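/- Let b_0 > 0 and b_{t+1}² = b_t² + β·a_t² for non-negative reals a_t and β > 0. Then for every k, ∑_{t=0}^{k} a_t²/b_{t+1}² ≤ (1/β)·(1 + log(b_{k+1}²/b_0²)). -/

import Mathlib

open Finset

theorem stmt_3 (β : ℝ) (hβ : 0 < β) (a b : ℕ → ℝ)
    (ha : ∀ t, 0 ≤ a t) (hb : ∀ t, 0 < b t)
    (hrec : ∀ t, (b (t + 1)) ^ 2 = (b t) ^ 2 + β * (a t) ^ 2) :
    ∀ k, ∑ t ∈ Finset.range (k + 1), (a t) ^ 2 / (b (t + 1)) ^ 2 ≤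
      (1 / β) * (1 + Real.log ((b (k + 1)) ^ 2 / (b 0) ^ 2)) := by
  have hbsq : ∀ t, (0:ℝ) < (b t) ^ 2 := fun t => pow_pos (hb t) 2
  have key : ∀ t, β * ((a t) ^ 2 / (b (t + 1)) ^ 2) ≤
      Real.log ((b (t+1))^2) - Real.log ((b t)^2) := by
    intro t
    have h1 : β * ((a t) ^ 2 / (b (t + 1)) ^ 2) = 1 - (b t)^2 / (b (t+1))^2 := by
      have hB : (b (t+1))^2 ≠ 0 := ne_of_gt (hbsq (t+1))
      field_simp [hB]
      rw [eq_sub_iff_add_eq, ← add_div, div_eq_one_iff_eq hB]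
      linarith [hrec t]
    rw [h1, ← Real.log_div (ne_of_gt (hbsq (t+1))) (ne_of_gt (hbsq t))]
    have hu : (0:ℝ) < (b (t+1))^2 / (b t)^2 := div_pos (hbsq (t+1)) (hbsq t)
    have hlog := Real.add_one_le_exp (Real.log ((b (t+1))^2 / (b t)^2))
    rw [Real.exp_log hu] at hlog
    have hinv : (b t)^2 / (b (t+1))^2 = ((b (t+1))^2 / (b t)^2)⁻¹ := by
      field_simp
    rw [hinv]
    have h2 : 1 ≤ (b (t+1))^2 / (b t)^2 := by
      rw [le_div_iff₀ (hbsq t)]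
      nlinarith [hrec t, sq_nonneg (a t), hβ.le, sq_nonneg (a t)]
    have hli := Real.log_le_sub_one_of_pos (inv_pos.mpr hu)
    rw [Real.log_inv] at hli
    linarith
  intro k
  have hsum : β * ∑ t ∈ Finset.range (k + 1), (a t) ^ 2 / (b (t + 1)) ^ 2 ≤
      Real.log ((b (k+1))^2) - Real.log ((b 0)^2) := by
    rw [Finset.mul_sum]
    calc ∑ t ∈ Finset.range (k + 1), β * ((a t) ^ 2 / (b (t + 1)) ^ 2)
        ≤ ∑ t ∈ Finset.range (k + 1), (Real.log ((b (t+1))^2) - Real.log ((b t)^2)) :=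
          Finset.sum_le_sum fun t _ => key t
      _ = Real.log ((b (k+1))^2) - Real.log ((b 0)^2) := by
          rw [Finset.sum_range_sub (fun t => Real.log ((b t)^2))]
  rw [Real.log_div (ne_of_gt (hbsq (k+1))) (ne_of_gt (hbsq 0))]
  have heq : (1:ℝ)/β * (1 + (Real.log ((b (k+1))^2) - Real.log ((b 0)^2))) =
      (1 + (Real.log ((b (k+1))^2) - Real.log ((b 0)^2))) / β := by ring
  rw [heq, le_div_iff₀ hβ]
  nlinarith [hsum]
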